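/- For c > 0, the function ρ_c(λ) = 1/(√(2π)·Γ(1+c)·|D₋c(iλ)|²) is strictly positive for all real λ, where D₋c(z) = (e^{-z²/4}/Γ(c)) · ∫₀^∞ e^{-zx - x²/2}·x^{c-1} dx. -/

import Mathlib

open MeasureTheory Complex

/-- The parabolic cylinder function `D₋c` via its integral representation (c > 0). -/
noncomputable def parabolicD (c : ℝ) (z : ℂ) : ℂ :=
  (Complex.exp (-z ^ 2 / 4) / (Real.Gamma c : ℂ)) *
    ∫ x in Set.Ioi (0 : ℝ), Complex.exp (-z * x - (x : ℂ) ^ 2 / 2) * ((x ^ (c - 1) : ℝ) : ℂ)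

noncomputable section AW

open Set

namespace AWaux

variable (c l : ℝ)

/-- the density `x^(c-1) e^{-x²/2}` extended by 0. -/
def G (x : ℝ) : ℝ := if 0 < x then x ^ (c - 1) * Real.exp (-(1/2) * x ^ 2) else 0

lemma G_meas : Measurable (G c) := by
  unfold G
  apply Measurable.ite measurableSet_Ioi _ measurable_const
  measurability

lemma G_int (hc : 0 < c) : Integrable (G c) := by
  have h := integrableOn_rpow_mul_exp_neg_mul_sq (b := 1/2) (by norm_num) (s := c - 1)
    (by linarith)
  rw [← integrable_indicator_iff measurableSet_Ioi] at h
  refine h.congr ?_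
  filter_upwards with x
  by_cases hx : 0 < x <;> simp [G, indicator, hx]

lemma G_mul_int (hc : 0 < c) : Integrable (fun x => x * G c x) := by
  have h := integrableOn_rpow_mul_exp_neg_mul_sq (b := 1/2) (by norm_num) (s := c)
    (by linarith)
  rw [← integrable_indicator_iff measurableSet_Ioi] at h
  refine h.congr ?_
  filter_upwards with x
  by_cases hx : 0 < x
  · simp only [G, indicator, hx, if_pos, mem_Ioi]
    rw [← mul_assoc, mul_comm x, ← Real.rpow_add_one hx.ne' (c-1)]
    ring_nf
  · simp [G, indicator, hx]

/-- `fA l x = e^{-i l x} G x`. -/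
def fA (x : ℝ) : ℂ := Complex.exp (-(I * l) * x) * (G c x : ℂ)

/-- `fB l x = x e^{-i l x} G x`. -/
def fB (x : ℝ) : ℂ := (x : ℂ) * Complex.exp (-(I * l) * x) * (G c x : ℂ)

lemma norm_exp_eq_one (x : ℝ) : ‖Complex.exp (-(I * l) * x)‖ = 1 := by
  rw [Complex.norm_exp]
  have : ((-(I * l) * x : ℂ)).re = 0 := by simp
  rw [this, Real.exp_zero]

lemma fA_int (hc : 0 < c) : Integrable (fA c l) := by
  refine ((G_int c hc).ofReal.bdd_mul ?_ (Filter.Eventually.of_forall fun x => le_of_eq (norm_exp_eq_one l x)))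
  exact (Complex.measurable_exp.comp (by measurability)).aestronglyMeasurable

lemma fB_int (hc : 0 < c) : Integrable (fB c l) := by
  have h := ((G_mul_int c hc).ofReal.bdd_mul
    ((Complex.measurable_exp.comp (by measurability : Measurable fun x : ℝ => -(I * l) * x)).aestronglyMeasurable)
    (Filter.Eventually.of_forall fun x => le_of_eq (norm_exp_eq_one l x)))
  refine h.congr ?_
  filter_upwards with x
  simp only [fB, Function.comp_apply]
  push_cast
  rw [mul_left_comm, ← mul_assoc]
  norm_num

lemma fA_conj (x : ℝ) : (starRingEnd ℂ) (fA c l x) = fA c (-l) x := by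
  simp only [fA, map_mul, Complex.conj_ofReal, ← Complex.exp_conj]
  congr 2
  simp

lemma fB_conj (x : ℝ) : (starRingEnd ℂ) (fB c l x) = fB c (-l) x := by
  simp only [fB, map_mul, Complex.conj_ofReal, ← Complex.exp_conj]
  congr 2
  simp

/-- the symmetrized kernel on the plane. -/
def Fz (z : ℝ × ℝ) : ℂ :=
  ((z.1 + z.2 : ℝ) : ℂ) * Complex.exp (-(I * l) * ((z.1 : ℂ) - (z.2 : ℂ))) *
    (G c z.1 : ℂ) * (G c z.2 : ℂ)

lemma Fz_eq (z : ℝ × ℝ) :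
    Fz c l z = fB c l z.1 * fA c (-l) z.2 + fA c l z.1 * fB c (-l) z.2 := by
  simp only [Fz, fA, fB]
  have h : Complex.exp (-(I * l) * ((z.1 : ℂ) - (z.2 : ℂ)))
      = Complex.exp (-(I * l) * z.1) * Complex.exp (-(I * (-l : ℝ)) * z.2) := by
    rw [← Complex.exp_add]
    push_cast
    ring_nf
  rw [h]
  push_cast
  ring

lemma Fz_int (hc : 0 < c) : Integrable (Fz c l) (volume.prod volume) := by
  have h1 : Integrable (fun z : ℝ × ℝ => fB c l z.1 * fA c (-l) z.2) (volume.prod volume) :=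
    (fB_int c l hc).mul_prod (fA_int c (-l) hc)
  have h2 : Integrable (fun z : ℝ × ℝ => fA c l z.1 * fB c (-l) z.2) (volume.prod volume) :=
    (fA_int c l hc).mul_prod (fB_int c (-l) hc)
  exact (h1.add h2).congr (by filter_upwards with z using (Fz_eq c l z).symm)

lemma step1 (hc : 0 < c) :
    ∫ z, Fz c l z ∂(volume.prod volume)
      = (∫ x, fB c l x) * (∫ x, fA c (-l) x) + (∫ x, fA c l x) * (∫ x, fB c (-l) x) := by
  rw [show (fun z => Fz c l z) = fun z : ℝ × ℝ =>
      fB c l z.1 * fA c (-l) z.2 + fA c l z.1 * fB c (-l) z.2 from funext (Fz_eq c l)]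
  rw [integral_add ((fB_int c l hc).mul_prod (fA_int c (-l) hc))
      ((fA_int c l hc).mul_prod (fB_int c (-l) hc)),
    integral_prod_mul, integral_prod_mul]

/-- the shear `(x, t) ↦ (x, x - t)`, an involutive measurable equiv. -/
def Teq : (ℝ × ℝ) ≃ᵐ (ℝ × ℝ) where
  toEquiv := ⟨fun z => (z.1, z.1 - z.2), fun z => (z.1, z.1 - z.2),
    fun z => by simp, fun z => by simp⟩
  measurable_toFun := measurable_fst.prodMk (measurable_fst.sub measurable_snd)
  measurable_invFun := measurable_fst.prodMk (measurable_fst.sub measurable_snd)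

lemma Teq_mp : MeasurePreserving (⇑Teq) (volume.prod volume) (volume.prod volume) := by
  have h1 : MeasurePreserving (Prod.map (id : ℝ → ℝ) (Neg.neg : ℝ → ℝ))
      (volume.prod volume) (volume.prod volume) :=
    (MeasurePreserving.id volume).prod (Measure.measurePreserving_neg volume)
  have h2 := measurePreserving_prod_add (volume : Measure ℝ) (volume : Measure ℝ)
  have : (⇑Teq) = (fun z : ℝ × ℝ => (z.1, z.1 + z.2)) ∘ Prod.map id Neg.neg := by
    ext z <;> simp [Teq, sub_eq_add_neg]
  rw [this]
  exact h2.comp h1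

lemma J_eq (hc : 0 < c) (t : ℝ) :
    ∫ x, (2 * x - t) * (G c x * G c (x - t)) = Real.Gamma c * Real.exp (-(1/2) * t ^ 2) := by
  set a := max t 0 with ha
  have hat : t ≤ a := le_max_left _ _
  have ha0 : 0 ≤ a := le_max_right _ _
  -- restrict to the support
  have hsupp : ∀ x ∉ Ioi a, (2 * x - t) * (G c x * G c (x - t)) = 0 := by
    intro x hx
    simp only [mem_Ioi, not_lt] at hx
    rcases le_max_iff.mp hx with h | h
    · have : ¬ (0 < x - t) := by linarith
      simp [G, this]
    · have : ¬ (0 < x) := by linarith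
      simp [G, this]
  rw [← setIntegral_eq_integral_of_forall_compl_eq_zero hsupp]
  -- change of variables q = x² - t x
  have hderiv : ∀ x ∈ Ioi a, HasDerivWithinAt (fun x => x ^ 2 - t * x) (2 * x - t) (Ioi a) x := by
    intro x _
    have : HasDerivAt (fun x : ℝ => x ^ 2 - t * x) (2 * x - t) x := by
      exact ((hasDerivAt_pow 2 x).sub ((hasDerivAt_id x).const_mul t)).congr_deriv (by norm_num)
    exact this.hasDerivWithinAt
  have hinj : InjOn (fun x : ℝ => x ^ 2 - t * x) (Ioi a) := by
    apply StrictMonoOn.injOn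
    intro x hx y hy hxy
    simp only [mem_Ioi] at hx hy
    dsimp only
    nlinarith [mul_pos (sub_pos.mpr hxy) (show (0:ℝ) < y + x - t by linarith)]
  have key := integral_image_eq_integral_abs_deriv_smul (f' := fun x => 2 * x - t)
    measurableSet_Ioi hderiv hinj
    (fun q => Real.exp (-q) * q ^ (c - 1) * Real.exp (-(1/2) * t ^ 2))
  have himg : (fun x : ℝ => x ^ 2 - t * x) '' Ioi a = Ioi 0 := by
    ext q
    simp only [mem_image, mem_Ioi]
    constructor
    · rintro ⟨x, hx, rfl⟩
      nlinarith
    · intro hq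
      have hs0 : (0:ℝ) ≤ t ^ 2 + 4 * q := by nlinarith
      set s := Real.sqrt (t ^ 2 + 4 * q) with hs
      have hs2 : s ^ 2 = t ^ 2 + 4 * q := Real.sq_sqrt hs0
      have hsn : 0 ≤ s := Real.sqrt_nonneg _
      refine ⟨(t + s) / 2, ?_, by nlinarith⟩
      have h1 : t < (t + s) / 2 := by nlinarith
      have h2 : 0 < (t + s) / 2 := by nlinarith
      exact max_lt h1 h2
  rw [himg] at key
  have hpt : EqOn (fun x => (2 * x - t) * (G c x * G c (x - t)))
      (fun x => |2 * x - t| • ((fun q => Real.exp (-q) * q ^ (c - 1) * Real.exp (-(1/2) * t ^ 2))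
        ((fun x : ℝ => x ^ 2 - t * x) x))) (Ioi a) := by
    intro x hx
    simp only [mem_Ioi] at hx
    have hx0 : 0 < x := lt_of_le_of_lt ha0 hx
    have hxt : 0 < x - t := by linarith [lt_of_le_of_lt hat hx]
    have h2 : 0 < 2 * x - t := by linarith
    have hGG : G c x * G c (x - t)
        = (x ^ 2 - t * x) ^ (c - 1) * Real.exp (-(x ^ 2 - t * x)) * Real.exp (-(1/2) * t ^ 2) := by
      simp only [G, if_pos hx0, if_pos hxt]
      rw [mul_mul_mul_comm, ← Real.mul_rpow hx0.le hxt.le, ← Real.exp_add,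
        show x * (x - t) = x ^ 2 - t * x by ring,
        show -(1/2) * x ^ 2 + -(1/2) * (x - t) ^ 2 = -(x ^ 2 - t * x) + -(1/2) * t ^ 2 by ring,
        Real.exp_add, ← mul_assoc]
    simp only [smul_eq_mul]
    rw [abs_of_pos h2, hGG]
    ring
  rw [setIntegral_congr_fun measurableSet_Ioi hpt, ← key, integral_mul_const,
    ← Real.Gamma_eq_integral hc]

lemma step2 (hc : 0 < c) :
    ∫ z, Fz c l z ∂(volume.prod volume)
      = ∫ t, (∫ x, Fz c l (x, x - t)) ∂(volume : Measure ℝ) := by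
  have hcomp : Integrable (fun z : ℝ × ℝ => Fz c l (z.1, z.1 - z.2)) (volume.prod volume) :=
    (Teq_mp.integrable_comp_emb Teq.measurableEmbedding (g := Fz c l)).mpr (Fz_int c l hc)
  have h1 : ∫ z, Fz c l z ∂(volume.prod volume)
      = ∫ z : ℝ × ℝ, Fz c l (z.1, z.1 - z.2) ∂(volume.prod volume) :=
    (Teq_mp.integral_comp Teq.measurableEmbedding (Fz c l)).symm
  rw [h1, integral_prod _ hcomp]
  exact integral_integral_swap (f := fun x y => Fz c l (x, x - y)) hcomp

lemma inner_eq (hc : 0 < c) (t : ℝ) :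
    ∫ x, Fz c l (x, x - t)
      = Complex.exp (-(I * l) * t) * ((Real.Gamma c * Real.exp (-(1/2) * t ^ 2) : ℝ) : ℂ) := by
  have hpt : ∀ x : ℝ, Fz c l (x, x - t)
      = Complex.exp (-(I * l) * t) * (((2 * x - t) * (G c x * G c (x - t)) : ℝ) : ℂ) := by
    intro x
    simp only [Fz]
    rw [show (-(I * (l:ℂ)) * ((x : ℂ) - ((x - t : ℝ) : ℂ))) = -(I * l) * t by push_cast; ring]
    push_cast
    ring
  simp_rw [hpt]
  have hre : (∫ a : ℝ, (((2 * a - t) * (G c a * G c (a - t)) : ℝ) : ℂ))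
      = ((∫ a : ℝ, (2 * a - t) * (G c a * G c (a - t)) : ℝ) : ℂ) := integral_ofReal
  rw [integral_const_mul, hre, J_eq c hc t]

lemma gauss :
    (∫ t : ℝ, Complex.exp (-(I * l) * t) * ((Real.Gamma c * Real.exp (-(1/2) * t ^ 2) : ℝ) : ℂ))
      = (Real.Gamma c : ℂ) * (Real.sqrt (2 * Real.pi) : ℂ)
          * Complex.exp (-(l:ℂ) ^ 2 / 2) := by
  have hpt : ∀ t : ℝ, Complex.exp (-(I * l) * t) * ((Real.Gamma c * Real.exp (-(1/2) * t ^ 2) : ℝ) : ℂ)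
      = (Real.Gamma c : ℂ) * (Complex.exp (I * (-(l:ℂ)) * t) * Complex.exp (-(1/2 : ℂ) * (t:ℂ) ^ 2)) := by
    intro t
    push_cast [Complex.ofReal_exp]
    ring_nf
  simp_rw [hpt]
  rw [integral_const_mul, fourierIntegral_gaussian (b := (1/2 : ℂ)) (by norm_num) (-(l:ℂ))]
  have hconst : ((Real.pi : ℂ) / (1/2)) ^ (1/2 : ℂ) = ((Real.sqrt (2 * Real.pi) : ℝ) : ℂ) := by
    rw [show ((Real.pi : ℂ) / (1/2)) = ((2 * Real.pi : ℝ) : ℂ) by push_cast; ring,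
      show ((1:ℂ)/2) = (((1:ℝ)/2 : ℝ) : ℂ) by norm_num,
      ← Complex.ofReal_cpow (by positivity), Real.sqrt_eq_rpow]
  have harg : (-(-(l:ℂ)) ^ 2 / (4 * (1/2))) = -(l:ℂ) ^ 2 / 2 := by ring
  rw [hconst, harg]
  ring

lemma key_eq (hc : 0 < c) :
    (∫ x, fB c l x) * (∫ x, fA c (-l) x) + (∫ x, fA c l x) * (∫ x, fB c (-l) x)
      = (Real.Gamma c : ℂ) * (Real.sqrt (2 * Real.pi) : ℂ) * Complex.exp (-(l:ℂ) ^ 2 / 2) := by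
  rw [← step1 c l hc, step2 c l hc]
  simp_rw [inner_eq c l hc]
  exact gauss c l

lemma fA_integral_ne (hc : 0 < c) : (∫ x, fA c l x) ≠ 0 := by
  intro h0
  have hconj : (∫ x, fA c (-l) x) = 0 := by
    have : ∫ x, fA c (-l) x = (starRingEnd ℂ) (∫ x, fA c l x) := by
      rw [← integral_conj]
      exact integral_congr_ae (Filter.Eventually.of_forall fun x => (fA_conj c l x).symm)
    rw [this, h0, map_zero]
  have h := key_eq c l hc
  rw [h0, hconj, mul_zero, zero_mul, add_zero] at h
  exact (mul_ne_zero (mul_ne_zero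
    (Complex.ofReal_ne_zero.mpr (Real.Gamma_pos_of_pos hc).ne')
    (Complex.ofReal_ne_zero.mpr (Real.sqrt_pos.mpr (by positivity)).ne'))
    (Complex.exp_ne_zero _)) h.symm

lemma u_eq :
    (∫ x in Ioi (0:ℝ), Complex.exp (-(I * (l:ℂ)) * x - (x:ℂ) ^ 2 / 2) * ((x ^ (c-1) : ℝ) : ℂ))
      = ∫ x, fA c l x := by
  rw [← setIntegral_eq_integral_of_forall_compl_eq_zero (s := Ioi (0:ℝ)) (f := fA c l)
    (fun x hx => by simp [fA, G, (by simpa using hx : ¬ 0 < x)])]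
  refine setIntegral_congr_fun measurableSet_Ioi fun x hx => ?_
  simp only [mem_Ioi] at hx
  rw [show -(I * (l:ℂ)) * (x:ℂ) - (x:ℂ) ^ 2 / 2 = -(I * l) * x + (-(1/2) * (x:ℂ) ^ 2) by ring,
    Complex.exp_add]
  simp only [fA, G, if_pos hx]
  push_cast [Complex.ofReal_exp]
  ring

end AWaux

end AW


/-- for `c > 0`, the Askey–Wimp–Kerov density
`ρ_c(λ) = 1/(√(2π)·Γ(1+c)·|D₋c(iλ)|²)` is strictly positive for all real `λ`
(in particular `D₋c(iλ) ≠ 0`). -/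
theorem stmt_8 (c : ℝ) (hc : 0 < c) :
    ∀ l : ℝ, 0 < 1 / (Real.sqrt (2 * Real.pi) * Real.Gamma (1 + c)
      * ‖parabolicD c (Complex.I * l)‖ ^ 2) := by
  intro l
  have hu : (∫ x in Set.Ioi (0:ℝ),
      Complex.exp (-(Complex.I * (l:ℂ)) * x - (x:ℂ) ^ 2 / 2) * ((x ^ (c-1) : ℝ) : ℂ)) ≠ 0 := by
    rw [AWaux.u_eq c l]
    exact AWaux.fA_integral_ne c l hc
  have hD : parabolicD c (Complex.I * l) ≠ 0 := by
    unfold parabolicD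
    exact mul_ne_zero (div_ne_zero (Complex.exp_ne_zero _)
      (Complex.ofReal_ne_zero.mpr (Real.Gamma_pos_of_pos hc).ne')) hu
  have h1 : 0 < Real.sqrt (2 * Real.pi) := Real.sqrt_pos.mpr (by positivity)
  have h2 : 0 < Real.Gamma (1 + c) := Real.Gamma_pos_of_pos (by linarith)
  have h3 : 0 < ‖parabolicD c (Complex.I * l)‖ := norm_pos_iff.mpr hD
  exact one_div_pos.mpr (mul_pos (mul_pos h1 h2) (pow_pos h3 2))
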